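/- Let P(m,n) = m³n³ + 15m²n² + 48mn − 27m² − 64, and for m > 0 set u(m) = 2 + m² + m√(4+m²) and g(m) = (1/(2m))·(3·2^{2/3}·u(m)^{1/3} + 6·2^{1/3}·u(m)^{−1/3} − 10). Then: (a) for every m > 0, g(m) is the unique real root of the cubic n ↦ P(m,n); (b) for all m > 0 and n > 1, P(m,n) < 0 if and only if m < 4 and n < g(m). -/

import Mathlib

/-- `P(m,n) = m³n³ + 15m²n² + 48mn − 27m² − 64`. -/
noncomputable def P (m n : ℝ) : ℝ :=
  m ^ 3 * n ^ 3 + 15 * m ^ 2 * n ^ 2 + 48 * m * n - 27 * m ^ 2 - 64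

/-- `u(m) = 2 + m² + m√(4 + m²)`. -/
noncomputable def u (m : ℝ) : ℝ := 2 + m ^ 2 + m * Real.sqrt (4 + m ^ 2)

/-- `g(m)`, the unique real root in `n` of the cubic `P(m, ·)`. -/
noncomputable def g (m : ℝ) : ℝ :=
  (1 / (2 * m)) * (3 * 2 ^ ((2 : ℝ) / 3) * u m ^ ((1 : ℝ) / 3)
    + 6 * 2 ^ ((1 : ℝ) / 3) * (u m ^ ((1 : ℝ) / 3))⁻¹ - 10)

lemma key (m : ℝ) (hm : 0 < m) :
    (m * g m) ^ 3 + 15 * (m * g m) ^ 2 + 48 * (m * g m) - 27 * m ^ 2 - 64 = 0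
      ∧ 1 < m * g m := by
  have hsq : Real.sqrt (4 + m ^ 2) ^ 2 = 4 + m ^ 2 := Real.sq_sqrt (by positivity)
  have hu2 : 2 < u m := by
    have : 0 < Real.sqrt (4 + m ^ 2) := Real.sqrt_pos.2 (by positivity)
    unfold u; nlinarith
  have hu0 : 0 < u m := by linarith
  have huid : u m ^ 2 + 4 = 2 * u m * (2 + m ^ 2) := by
    unfold u; nlinarith [hsq]
  set v : ℝ := u m ^ ((1 : ℝ)/3) with hv_def
  set c : ℝ := (2 : ℝ) ^ ((1 : ℝ)/3) with hc_def
  have hv0 : 0 < v := Real.rpow_pos_of_pos hu0 _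
  have hc0 : 0 < c := Real.rpow_pos_of_pos two_pos _
  have hv3 : v ^ 3 = u m := by
    rw [hv_def, ← Real.rpow_natCast (u m ^ ((1:ℝ)/3)) 3, ← Real.rpow_mul hu0.le]
    norm_num
  have hc3 : c ^ 3 = 2 := by
    rw [hc_def, ← Real.rpow_natCast ((2:ℝ) ^ ((1:ℝ)/3)) 3, ← Real.rpow_mul (by norm_num : (0:ℝ) ≤ 2)]
    norm_num
  have hc2 : (2 : ℝ) ^ ((2 : ℝ)/3) = c ^ 2 := by
    rw [hc_def, ← Real.rpow_natCast ((2:ℝ) ^ ((1:ℝ)/3)) 2, ← Real.rpow_mul (by norm_num : (0:ℝ) ≤ 2)]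
    norm_num
  set w : ℝ := v / c + c / v with hw_def
  have hgt : m * g m = 3 * w - 5 := by
    unfold g
    rw [← hv_def, ← hc_def, hc2, hw_def]
    field_simp
    ring_nf
    linear_combination (3 * v ^ 2) * hc3
  have hw3 : w ^ 3 = 3 * w + 2 + m ^ 2 := by
    have h1 : w ^ 3 = v ^ 3 / c ^ 3 + c ^ 3 / v ^ 3 + 3 * w := by
      rw [hw_def]; field_simp; ring
    rw [h1, hv3, hc3]
    have h2 : u m / 2 + 2 / u m = 2 + m ^ 2 := by
      field_simp; nlinarith [huid]
    linarith [h2]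
  have hvc : c < v := by
    by_contra h
    push_neg at h
    have : v ^ 3 ≤ c ^ 3 := pow_le_pow_left₀ hv0.le h 3
    rw [hv3, hc3] at this; linarith
  have hw2 : 2 < w := by
    have he : w - 2 = (v - c) ^ 2 / (c * v) := by rw [hw_def]; field_simp; ring
    have hp : 0 < (v - c) ^ 2 / (c * v) :=
      div_pos (pow_pos (sub_pos.2 hvc) 2) (mul_pos hc0 hv0)
    have h2 : 0 < w - 2 := he ▸ hp
    linarith
  constructor
  · rw [hgt]; linear_combination 27 * hw3
  · rw [hgt]; linarith

lemma fac (m : ℝ) (hm : 0 < m) (n : ℝ) :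
    P m n = (m * n - m * g m) *
      ((m * n) ^ 2 + (m * n) * (m * g m + 15) + ((m * g m) ^ 2 + 15 * (m * g m) + 48)) := by
  have h0 := (key m hm).1
  unfold P; linear_combination h0

lemma quad_pos (m : ℝ) (hm : 0 < m) (x : ℝ) :
    0 < x ^ 2 + x * (m * g m + 15) + ((m * g m) ^ 2 + 15 * (m * g m) + 48) := by
  have h1 := (key m hm).2
  nlinarith [sq_nonneg (2 * x + m * g m + 15),
    mul_pos (sub_pos.2 h1) (by linarith : (0:ℝ) < m * g m + 11)]

/-- (a) For `m > 0`, `g(m)` is the unique real root of `n ↦ P(m,n)`;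
(b) for `m > 0` and `n > 1`, `P(m,n) < 0` iff `m < 4` and `n < g(m)`. -/
theorem g_unique_root_and_P_neg_iff :
    (∀ m : ℝ, 0 < m → P m (g m) = 0 ∧ ∀ n : ℝ, P m n = 0 → n = g m) ∧
    (∀ m n : ℝ, 0 < m → 1 < n → (P m n < 0 ↔ m < 4 ∧ n < g m)) := by
  constructor
  · intro m hm
    refine ⟨by rw [fac m hm (g m)]; ring, ?_⟩
    intro n hPn
    have h := fac m hm n
    rw [hPn] at h
    have hq := quad_pos m hm (m * n)
    have hmn : m * n - m * g m = 0 := by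
      rcases mul_eq_zero.1 h.symm with h' | h'
      · exact h'
      · exact absurd h' hq.ne'
    exact mul_left_cancel₀ hm.ne' (by linarith)
  · intro m n hm hn
    have h := fac m hm n
    have hq := quad_pos m hm (m * n)
    have hiff : P m n < 0 ↔ n < g m := by
      rw [h]
      constructor
      · intro hneg
        by_contra hc
        push_neg at hc
        have h0 : 0 ≤ m * n - m * g m := by nlinarith
        nlinarith
      · intro hlt
        have hneg : m * n - m * g m < 0 := by nlinarith
        exact mul_neg_of_neg_of_pos hneg hq
    constructor
    · intro hneg
      have hng := hiff.1 hneg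
      refine ⟨?_, hng⟩
      have h1 := (key m hm).2
      have hfac1 := fac m hm 1
      have hp1 : P m 1 = (m - 4) ^ 3 := by unfold P; ring
      have hqm := quad_pos m hm (m * 1)
      have hneg1 : P m 1 < 0 := by
        rw [hfac1]
        exact mul_neg_of_neg_of_pos (by nlinarith) hqm
      rw [hp1] at hneg1
      nlinarith [sq_nonneg (m - 4)]
    · rintro ⟨hm4, hng⟩
      exact hiff.2 hng
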